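/- If a = (a', t) and b = (b', s) are nonzero elements of the second-order cone Q with ⟨a, b⟩ = 0, then t = ‖a'‖, s = ‖b'‖, and b = |α| • (−a', ‖a'‖) for some negative scalar α with b' = α a'. -/

import Mathlib

theorem soc_orth_structure (a' b' : EuclideanSpace ℝ (Fin 2)) (t s : ℝ)
    (ha : ‖a'‖ ≤ t) (hb : ‖b'‖ ≤ s)
    (ha0 : ¬(a' = 0 ∧ t = 0)) (hb0 : ¬(b' = 0 ∧ s = 0))
    (horth : inner ℝ a' b' + t * s = (0 : ℝ)) :
    t = ‖a'‖ ∧ s = ‖b'‖ ∧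
      ∃ α : ℝ, α < 0 ∧ b' = α • a' ∧ s = |α| * ‖a'‖ := by
  have ht0 : 0 ≤ t := le_trans (norm_nonneg _) ha
  have hs0 : 0 ≤ s := le_trans (norm_nonneg _) hb
  have hspos : 0 < s := by
    rcases lt_or_eq_of_le hs0 with h | h
    · exact h
    · exfalso
      have : ‖b'‖ = 0 := le_antisymm (h ▸ hb) (norm_nonneg _)
      exact hb0 ⟨norm_eq_zero.mp this, h.symm⟩
  have htpos : 0 < t := by
    rcases lt_or_eq_of_le ht0 with h | h
    · exact h
    · exfalso
      have : ‖a'‖ = 0 := le_antisymm (h ▸ ha) (norm_nonneg _)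
      exact ha0 ⟨norm_eq_zero.mp this, h.symm⟩
  have hcs : |(inner ℝ a' b' : ℝ)| ≤ ‖a'‖ * ‖b'‖ := abs_real_inner_le_norm a' b'
  have hmul : ‖a'‖ * ‖b'‖ ≤ t * s :=
    mul_le_mul ha hb (norm_nonneg _) ht0
  have hinner : (inner ℝ a' b' : ℝ) = -(‖a'‖ * ‖b'‖) := by
    have h1 : -(t*s) = (inner ℝ a' b' : ℝ) := by linarith
    have h2 : -(‖a'‖ * ‖b'‖) ≤ (inner ℝ a' b' : ℝ) := neg_le_of_abs_le hcs
    linarith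
  have heq : t * s = ‖a'‖ * ‖b'‖ := by linarith
  have ht : t = ‖a'‖ := by nlinarith [norm_nonneg a', norm_nonneg b']
  have hs : s = ‖b'‖ := by nlinarith [norm_nonneg a', norm_nonneg b']
  have hapos : 0 < ‖a'‖ := ht ▸ htpos
  have hbpos : 0 < ‖b'‖ := hs ▸ hspos
  refine ⟨ht, hs, -(‖b'‖ / ‖a'‖), neg_lt_zero.mpr (by positivity), ?_, ?_⟩
  · have hineq : (inner ℝ a' (-b') : ℝ) = ‖a'‖ * ‖-b'‖ := by
      rw [inner_neg_right, norm_neg]; linarith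
    have := (inner_eq_norm_mul_iff_real).mp hineq
    rw [norm_neg] at this
    have hb' : (-b') = (‖b'‖ / ‖a'‖) • a' := by
      have h2 : (‖a'‖⁻¹ * ‖b'‖) • a' = (‖a'‖⁻¹ * ‖a'‖) • (-b') := by
        rw [mul_smul, mul_smul, this]
      rw [inv_mul_cancel₀ (ne_of_gt hapos), one_smul] at h2
      rw [← h2]; ring_nf
    have : b' = -((‖b'‖ / ‖a'‖) • a') := by rw [← hb']; simp
    rw [neg_smul]; exact this
  · rw [hs, abs_neg, abs_of_pos (by positivity : (0:ℝ) < ‖b'‖ / ‖a'‖)]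
    field_simp
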